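/- For all units u and v: if norm u = norm v then eval u = eval v; if eval u = eval v then root u = root v; and if root u = root v then dim u = dim v. In other words, normal equivalence entails numerical equivalence, which entails root equivalence, which entails codimensionality. -/

import Mathlib

open Finsupp

/-- The positive rationals, as a multiplicative group. -/
abbrev Ratio : Type := {q : ℚ // 0 < q}

/-- Prefixes: the free abelian group over base prefixes `P`. -/
abbrev PrefG (P : Type*) : Type _ := P →₀ ℤ
/-- Root units: the free abelian group over base units `B`. -/
abbrev RootG (B : Type*) : Type _ := B →₀ ℤ
/-- Units: the free abelian group over preunits (prefix, base unit). -/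
abbrev UnitG (P B : Type*) : Type _ := ((P →₀ ℤ) × B) →₀ ℤ

variable {P B D : Type*}

/-- The root of a unit: forget all prefixes. -/
noncomputable def rootU (u : UnitG P B) : RootG B :=
  Finsupp.mapDomain Prod.snd u

/-- Embed a root unit back into the units, with empty prefixes. -/
noncomputable def unrootU (f : RootG B) : UnitG P B :=
  Finsupp.mapDomain (fun b => ((0 : PrefG P), b)) f

/-- Strip all prefixes from a unit. -/
noncomputable def stripU (u : UnitG P B) : UnitG P B := unrootU (rootU u)

/-- The value of a prefix, given values of base prefixes. -/
noncomputable def valP (val₀ : P → Ratio) (f : PrefG P) : Ratio :=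
  ∏ p ∈ f.support, val₀ p ^ (f p)

/-- The prefix value of a unit. -/
noncomputable def pvalU (val₀ : P → Ratio) (g : UnitG P B) : Ratio :=
  ∏ x ∈ g.support, valP val₀ x.1 ^ (g x)

/-- The dimension of a root unit, given dimensions of base units. -/
noncomputable def dimRoot (dim₀ : B → D →₀ ℤ) (f : RootG B) : D →₀ ℤ :=
  ∑ b ∈ f.support, f b • dim₀ b

/-- The dimension of a unit. -/
noncomputable def dimU (dim₀ : B → D →₀ ℤ) (u : UnitG P B) : D →₀ ℤ :=
  dimRoot dim₀ (rootU u)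

/-- The combined prefix of a unit. -/
noncomputable def prefU (u : UnitG P B) : PrefG P :=
  ∑ x ∈ u.support, u x • x.1

/-- Normalization of a unit. -/
noncomputable def normU (u : UnitG P B) : PrefG P × RootG B :=
  (prefU u, rootU u)

/-- Evaluation of a unit. -/
noncomputable def evalU (val₀ : P → Ratio) (u : UnitG P B) : Ratio × RootG B :=
  (pvalU val₀ u, rootU u)

/-- A unit conversion: dimensionally consistent and functional in the ratio. -/
def IsConversion (dim₀ : B → D →₀ ℤ) (C : Set (UnitG P B × Ratio × UnitG P B)) : Prop :=
  (∀ u r v, (u, r, v) ∈ C → dimU dim₀ u = dimU dim₀ v) ∧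
  (∀ u r r' v, (u, r, v) ∈ C → (u, r', v) ∈ C → r = r')

/-- The closure rules for unit conversions. -/
inductive ClosureRel {P B : Type*} (val₀ : P → Ratio)
    (C : Set (UnitG P B × Ratio × UnitG P B)) :
    UnitG P B → Ratio → UnitG P B → Prop
  | base {u r v} : (u, r, v) ∈ C → ClosureRel val₀ C u r v
  | mul {u r v u' r' v'} : ClosureRel val₀ C u r v → ClosureRel val₀ C u' r' v' →
      ClosureRel val₀ C (u + u') (r * r') (v + v')
  | inv {u r v} : ClosureRel val₀ C u r v → ClosureRel val₀ C (-u) r⁻¹ (-v)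
  | pe (u : UnitG P B) : ClosureRel val₀ C u (pvalU val₀ u) (stripU u)
  | pe' (u : UnitG P B) : ClosureRel val₀ C (stripU u) (pvalU val₀ u)⁻¹ u

/-- The conversion closure: the smallest relation containing `C` closed under the rules. -/
def convClosure (val₀ : P → Ratio) (C : Set (UnitG P B × Ratio × UnitG P B)) :
    Set (UnitG P B × Ratio × UnitG P B) :=
  {t | ClosureRel val₀ C t.1 t.2.1 t.2.2}

/-- Convertibility with respect to a conversion. -/
def Convertible (C : Set (UnitG P B × Ratio × UnitG P B)) (u v : UnitG P B) : Prop :=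
  ∃ r, (u, r, v) ∈ C

/-- Coherence with respect to a conversion. -/
def Coherent (C : Set (UnitG P B × Ratio × UnitG P B)) (u v : UnitG P B) : Prop :=
  (u, (1 : Ratio), v) ∈ C

/-- The unit `δu₀` corresponding to a base unit. -/
noncomputable def deltaB (P : Type*) {B : Type*} (u₀ : B) : UnitG P B :=
  Finsupp.single ((0 : PrefG P), u₀) 1

/-- A defining conversion: basic and functional in its first component. -/
def IsDefining (C : Set (UnitG P B × Ratio × UnitG P B)) : Prop :=
  (∀ u r v, (u, r, v) ∈ C → ∃ u₀ : B, u = deltaB P u₀) ∧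
  (∀ u r v r' v', (u, r, v) ∈ C → (u, r', v') ∈ C → v = v')

/-- One-step dependency between base units. -/
def Depends (C : Set (UnitG P B × Ratio × UnitG P B)) (u₀ v₀ : B) : Prop :=
  ∃ r v, (deltaB P u₀, r, v) ∈ C ∧ v₀ ∈ (rootU v).support

/-- The dependency order `>_C`. -/
def DepOrd (C : Set (UnitG P B × Ratio × UnitG P B)) : B → B → Prop :=
  Relation.TransGen (Depends C)

/-- The domain of a defining conversion. -/
def domC (C : Set (UnitG P B × Ratio × UnitG P B)) : Set B :=
  {u₀ : B | ∃ r v, (deltaB P u₀, r, v) ∈ C}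


/-- Definition expansion. -/
noncomputable def xpd (C : Set (UnitG P B × Ratio × UnitG P B)) (u₀ : B) :
    Ratio × UnitG P B :=
  haveI := Classical.propDecidable (∃ rv : Ratio × UnitG P B, (deltaB P u₀, rv.1, rv.2) ∈ C)
  if h : ∃ rv : Ratio × UnitG P B, (deltaB P u₀, rv.1, rv.2) ∈ C then h.choose
  else (1, deltaB P u₀)

/-- The base rewriting map. -/
noncomputable def rwrB (val₀ : P → Ratio) (C : Set (UnitG P B × Ratio × UnitG P B))
    (u₀ : B) : Ratio × RootG B :=
  ((xpd C u₀).1 * pvalU val₀ (xpd C u₀).2, rootU (xpd C u₀).2)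

/-- One rewriting step on evaluated units. -/
noncomputable def rwrStep (val₀ : P → Ratio) (C : Set (UnitG P B × Ratio × UnitG P B)) :
    Ratio × RootG B → Ratio × RootG B :=
  fun p => (p.1 * ∏ b ∈ p.2.support, (rwrB val₀ C b).1 ^ (p.2 b),
            ∑ b ∈ p.2.support, p.2 b • (rwrB val₀ C b).2)


lemma valP_eq_prod {P : Type*} (val₀ : P → Ratio) (f : PrefG P) :
    valP val₀ f = f.prod (fun p n => val₀ p ^ n) := rfl

lemma ratio_ext {a b : Ratio} (h : (a : ℚ) = (b : ℚ)) : a = b := Subtype.ext h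

/-- The coercion as a monoid hom. -/
def ratioCoeHom : Ratio →* ℚ where
  toFun := Subtype.val
  map_one' := rfl
  map_mul' _ _ := rfl

lemma coe_valP {P : Type*} (val₀ : P → Ratio) (f : PrefG P) :
    ((valP val₀ f : Ratio) : ℚ) = f.prod (fun p n => (val₀ p : ℚ) ^ n) := by
  rw [valP_eq_prod]
  have := map_finsuppProd ratioCoeHom f (fun p n => val₀ p ^ n)
  simpa [ratioCoeHom] using this

lemma valP_zero {P : Type*} (val₀ : P → Ratio) : valP val₀ (0 : PrefG P) = 1 := by
  simp [valP_eq_prod]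

lemma valP_add {P : Type*} (val₀ : P → Ratio) (f g : PrefG P) :
    valP val₀ (f + g) = valP val₀ f * valP val₀ g := by
  apply ratio_ext
  rw [Positive.val_mul, coe_valP, coe_valP, coe_valP]
  exact Finsupp.prod_add_index' (by intros; simp)
    (fun p m n => zpow_add₀ (ne_of_gt (val₀ p).2) m n)

lemma valP_zsmul {P : Type*} (val₀ : P → Ratio) (n : ℤ) (f : PrefG P) :
    valP val₀ (n • f) = valP val₀ f ^ n := by
  apply ratio_ext
  rw [Positive.coe_zpow, coe_valP, coe_valP]
  have hmap : n • f = f.mapRange (fun m => n * m) (by simp) := by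
    ext p; simp
  rw [hmap, Finsupp.prod_mapRange_index (by intro p; simp), Finsupp.prod, Finsupp.prod,
    ← Finset.prod_zpow]
  exact Finset.prod_congr rfl fun p _ => by rw [mul_comm, zpow_mul]

lemma valP_sum {P ι : Type*} (val₀ : P → Ratio) (s : Finset ι) (g : ι → PrefG P) :
    valP val₀ (∑ x ∈ s, g x) = ∏ x ∈ s, valP val₀ (g x) := by
  classical
  induction s using Finset.induction_on with
  | empty => simp [valP_zero]
  | insert x s hx ih =>
    rw [Finset.sum_insert hx, Finset.prod_insert hx, valP_add, ih]

lemma pvalU_eq_valP_prefU {P B : Type*} (val₀ : P → Ratio) (u : UnitG P B) :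
    pvalU val₀ u = valP val₀ (prefU u) := by
  rw [prefU, valP_sum]
  unfold pvalU
  exact Finset.prod_congr rfl fun x _ => (valP_zsmul val₀ (u x) x.1).symm

/-- Normal equivalence entails numerical equivalence, which entails root equivalence,
which entails codimensionality. -/
theorem norm_entails_eval_entails_root_entails_dim {P B D : Type*}
    (val₀ : P → Ratio) (dim₀ : B → D →₀ ℤ) (u v : UnitG P B) :
    (normU u = normU v → evalU val₀ u = evalU val₀ v) ∧
    (evalU val₀ u = evalU val₀ v → rootU u = rootU v) ∧
    (rootU u = rootU v → dimU dim₀ u = dimU dim₀ v) := by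
  refine ⟨?_, ?_, ?_⟩
  · intro h
    have h1 : prefU u = prefU v := congrArg Prod.fst h
    have h2 : rootU u = rootU v := congrArg Prod.snd h
    unfold evalU
    rw [pvalU_eq_valP_prefU, pvalU_eq_valP_prefU, h1, h2]
  · intro h
    exact congrArg Prod.snd h
  · intro h
    unfold dimU
    rw [h]
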